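/- Let Γ ↷ (B,ν) be a measure-class-preserving action of a countable group on a standard probability space, and Γ ↷ (X,μ) a p.m.p. action. Then the ratio set of the product action satisfies RS(Γ, B×X, ν×μ) ⊆ RS(Γ, B, ν). -/

import Mathlib

open MeasureTheory
open scoped ENNReal

/-- The ratio set (asymptotic ratio set) of the Radon–Nikodym cocycle of a nonsingular
action `T` of a group `G` on `(α, ν)`, as a subset of `[0,∞]`.  Here
`(ν.map (T g).symm).rnDeriv ν` plays the role of `dν∘g/dν`. -/
def ratioSet {α G : Type*} [MeasurableSpace α] [Group G]
    (T : G → α ≃ α) (ν : Measure α) : Set ℝ≥0∞ :=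
  {r | if r = ⊤ then
      ∀ A : Set α, MeasurableSet A → 0 < ν A → ∀ n : ℕ,
        ∃ (A' : Set α) (g : G), MeasurableSet A' ∧ A' ⊆ A ∧ 0 < ν A' ∧ g ≠ 1 ∧
          (∀ a ∈ A', T g a ∈ A) ∧
          ∀ a ∈ A', (n : ℝ) < ((ν.map ((T g).symm)).rnDeriv ν a).toReal
    else
      ∀ A : Set α, MeasurableSet A → 0 < ν A → ∀ ε : ℝ, 0 < ε →
        ∃ (A' : Set α) (g : G), MeasurableSet A' ∧ A' ⊆ A ∧ 0 < ν A' ∧ g ≠ 1 ∧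
          (∀ a ∈ A', T g a ∈ A) ∧
          ∀ a ∈ A', |((ν.map ((T g).symm)).rnDeriv ν a).toReal - r.toReal| < ε}

lemma rnDeriv_prod_fst' {B X : Type*} [MeasurableSpace B] [MeasurableSpace X]
    (ν : Measure B) [IsProbabilityMeasure ν] (μ : Measure X) [IsProbabilityMeasure μ]
    (κ : Measure B) [IsFiniteMeasure κ] (hκ : κ ≪ ν) :
    (κ.prod μ).rnDeriv (ν.prod μ) =ᵐ[ν.prod μ] fun p => κ.rnDeriv ν p.1 := by
  have hf : Measurable (κ.rnDeriv ν) := Measure.measurable_rnDeriv κ ν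
  have hw : κ.prod μ = (ν.prod μ).withDensity (fun p => κ.rnDeriv ν p.1) := by
    refine Measure.prod_eq fun s t hs ht => ?_
    rw [withDensity_apply _ (hs.prod ht), ← Measure.prod_restrict,
      lintegral_prod (fun p => κ.rnDeriv ν p.1) ((hf.comp measurable_fst).aemeasurable)]
    simp only [lintegral_const, Measure.restrict_apply_univ]
    rw [lintegral_mul_const _ hf, Measure.setLIntegral_rnDeriv hκ]
  rw [hw]
  exact Measure.rnDeriv_withDensity _ (hf.comp measurable_fst)

lemma ratioSet_extract {B X G : Type*} [MeasurableSpace B] [MeasurableSpace X] [Group G]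
    (ν : Measure B) [IsProbabilityMeasure ν] (μ : Measure X) [IsProbabilityMeasure μ]
    (TB : G → B ≃ B) (TX : G → X ≃ X)
    (hTBm : ∀ g, Measurable (TB g : B → B) ∧ Measurable ((TB g).symm : B → B))
    (hTXm : ∀ g, Measurable (TX g : X → X) ∧ Measurable ((TX g).symm : X → X))
    (hqi : ∀ g, ν.map (TB g) ≪ ν ∧ ν ≪ ν.map (TB g))
    (hμinv : ∀ g, MeasurePreserving (TX g : X → X) μ μ)
    (P : ℝ≥0∞ → Prop) (A : Set B) (g : G)
    (A' : Set (B × X)) (hA'm : MeasurableSet A') (hA'sub : A' ⊆ A ×ˢ Set.univ)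
    (hA'pos : 0 < (ν.prod μ) A')
    (hmap : ∀ p ∈ A', ((TB g).prodCongr (TX g)) p ∈ A ×ˢ Set.univ)
    (hP : ∀ p ∈ A',
      P (((ν.prod μ).map (((TB g).prodCongr (TX g)).symm)).rnDeriv (ν.prod μ) p)) :
    ∃ A'' : Set B, MeasurableSet A'' ∧ A'' ⊆ A ∧ 0 < ν A'' ∧
      (∀ b ∈ A'', TB g b ∈ A) ∧ ∀ b ∈ A'', P ((ν.map ((TB g).symm)).rnDeriv ν b) := by
  have hmB := hTBm g
  have hmX := hTXm g
  set κ := ν.map ((TB g).symm) with hκdef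
  haveI : IsProbabilityMeasure κ := Measure.isProbabilityMeasure_map hmB.2.aemeasurable
  have hκ : κ ≪ ν := by
    have h1 : ν ≪ ν.map (TB g) := (hqi g).2
    have h2 : κ ≪ (ν.map (TB g)).map ((TB g).symm) := h1.map hmB.2
    have h3 : (ν.map (TB g)).map ((TB g).symm) = ν := by
      rw [Measure.map_map hmB.2 hmB.1]
      simp
    rwa [h3] at h2
  have hXmap : μ.map ((TX g).symm) = μ := by
    conv_lhs => rw [← (hμinv g).map_eq]
    rw [Measure.map_map hmX.2 hmX.1]
    simp
  have hcoe : ⇑((TB g).prodCongr (TX g)).symm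
      = Prod.map (⇑(TB g).symm) (⇑(TX g).symm) := rfl
  have hmapsymm : (ν.prod μ).map (((TB g).prodCongr (TX g)).symm) = κ.prod μ := by
    rw [hcoe, ← Measure.map_prod_map _ _ hmB.2 hmX.2, hXmap]
  have hae : ((ν.prod μ).map (((TB g).prodCongr (TX g)).symm)).rnDeriv (ν.prod μ)
      =ᵐ[ν.prod μ] fun p => κ.rnDeriv ν p.1 := by
    rw [hmapsymm]
    exact rnDeriv_prod_fst' ν μ κ hκ
  set F := ((ν.prod μ).map (((TB g).prodCongr (TX g)).symm)).rnDeriv (ν.prod μ) with hF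
  set N := toMeasurable (ν.prod μ) {p : B × X | ¬ F p = κ.rnDeriv ν p.1} with hN
  have hNnull : (ν.prod μ) N = 0 := by
    rw [hN, measure_toMeasurable]
    exact hae
  set A₂ := A' \ N with hA₂
  have hA₂m : MeasurableSet A₂ := hA'm.diff (measurableSet_toMeasurable _ _)
  have hA₂pos : 0 < (ν.prod μ) A₂ := by
    rwa [hA₂, measure_diff_null hNnull]
  set S := {b : B | μ (Prod.mk b ⁻¹' A₂) ≠ 0} with hS
  have hSm : MeasurableSet S :=
    (measurable_measure_prodMk_left hA₂m (measurableSet_singleton 0).compl)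
  have hSpos : 0 < ν S := by
    by_contra h
    push_neg at h
    have hS0 : ν S = 0 := le_antisymm h zero_le
    have : (ν.prod μ) A₂ = 0 := by
      rw [Measure.prod_apply hA₂m]
      rw [lintegral_eq_zero_iff (measurable_measure_prodMk_left hA₂m)]
      rw [Filter.eventuallyEq_iff_exists_mem]
      exact ⟨Sᶜ, by rwa [mem_ae_iff, compl_compl], fun b hb => by simpa using not_not.mp hb⟩
    exact absurd this hA₂pos.ne'
  have hslice : ∀ b ∈ S, ∃ x, (b, x) ∈ A₂ := by
    intro b hb
    by_contra h
    push_neg at h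
    have : Prod.mk b ⁻¹' A₂ = ∅ := by
      ext x; simp [h x]
    exact hb (by rw [this]; simp)
  refine ⟨S, hSm, ?_, hSpos, ?_, ?_⟩
  · intro b hb
    obtain ⟨x, hx⟩ := hslice b hb
    exact (hA'sub hx.1).1
  · intro b hb
    obtain ⟨x, hx⟩ := hslice b hb
    exact (hmap _ hx.1).1
  · intro b hb
    obtain ⟨x, hx⟩ := hslice b hb
    have heq : F (b, x) = κ.rnDeriv ν b := by
      by_contra h
      exact hx.2 (subset_toMeasurable _ _ h)
    have := hP _ hx.1
    rwa [heq] at this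

/-- (Bowen–Nevo, §4.1): for a nonsingular action on `(B,ν)` and a p.m.p. action on `(X,μ)`,
the ratio set of the product action is contained in the ratio set of the action on `(B,ν)`. -/
theorem ratioSet_prod_subset {B X G : Type*} [MeasurableSpace B] [MeasurableSpace X] [Group G]
    (ν : Measure B) [IsProbabilityMeasure ν] (μ : Measure X) [IsProbabilityMeasure μ]
    (TB : G → B ≃ B) (TX : G → X ≃ X)
    (hTBm : ∀ g, Measurable (TB g : B → B) ∧ Measurable ((TB g).symm : B → B))
    (hTXm : ∀ g, Measurable (TX g : X → X) ∧ Measurable ((TX g).symm : X → X))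
    (hqi : ∀ g, ν.map (TB g) ≪ ν ∧ ν ≪ ν.map (TB g))
    (hμinv : ∀ g, MeasurePreserving (TX g : X → X) μ μ) :
    ratioSet (fun g => (TB g).prodCongr (TX g)) (ν.prod μ) ⊆ ratioSet TB ν := by
  intro r hr
  simp only [ratioSet, Set.mem_setOf_eq] at hr ⊢
  by_cases hrtop : r = ⊤
  · rw [if_pos hrtop] at hr ⊢
    intro A hA hApos n
    have hprodpos : 0 < (ν.prod μ) (A ×ˢ Set.univ) := by
      rw [Measure.prod_prod, measure_univ, mul_one]; exact hApos
    obtain ⟨A', g, hA'm, hsub, hpos, hg, hmap, hP⟩ :=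
      hr (A ×ˢ Set.univ) (hA.prod MeasurableSet.univ) hprodpos n
    obtain ⟨A'', hm, hsub', hpos', hmaps, hP'⟩ :=
      ratioSet_extract ν μ TB TX hTBm hTXm hqi hμinv
        (fun v => (n : ℝ) < v.toReal) A g A' hA'm hsub hpos hmap hP
    exact ⟨A'', g, hm, hsub', hpos', hg, hmaps, hP'⟩
  · rw [if_neg hrtop] at hr ⊢
    intro A hA hApos ε hε
    have hprodpos : 0 < (ν.prod μ) (A ×ˢ Set.univ) := by
      rw [Measure.prod_prod, measure_univ, mul_one]; exact hApos
    obtain ⟨A', g, hA'm, hsub, hpos, hg, hmap, hP⟩ :=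
      hr (A ×ˢ Set.univ) (hA.prod MeasurableSet.univ) hprodpos ε hε
    obtain ⟨A'', hm, hsub', hpos', hmaps, hP'⟩ :=
      ratioSet_extract ν μ TB TX hTBm hTXm hqi hμinv
        (fun v => |v.toReal - r.toReal| < ε) A g A' hA'm hsub hpos hmap hP
    exact ⟨A'', g, hm, hsub', hpos', hg, hmaps, hP'⟩
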